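/- Let X ≥ e be a real number. Suppose there exist I ∈ ℕ and natural numbers x_0, x_1, …, x_{I+1} with x_0 = 2 such that for each i = 0, …, I, x_{i+1} is the largest natural number n > x_i with li̲(n) ≤ π(x_i), and X ≤ x_{I+1}. Then li̲(x) ≤ π(x) for all real x with e ≤ x ≤ X. -/

import Mathlib

/-- The Stieltjes asymptotic approximation of `li(x)`:
`li_*(x) = (x/log x)·Σ_{k=0}^{n−1} k!/(log x)^k + (log x − n)·x·n!/(log x)^(n+1)`
with `n = ⌊log x⌋`. -/
noncomputable def liStar (x : ℝ) : ℝ :=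
  x / Real.log x *
      ∑ k ∈ Finset.range ⌊Real.log x⌋₊, (Nat.factorial k : ℝ) / Real.log x ^ k
    + (Real.log x - ⌊Real.log x⌋₊) * x * (Nat.factorial ⌊Real.log x⌋₊ : ℝ)
      / Real.log x ^ (⌊Real.log x⌋₊ + 1)

/-- The truncated asymptotic approximation of `li(x)` with truncation parameter `κ`
and fractional coefficient `α`:
`li_{κ,α}(x) = (x/log x)·(α·m!/(log x)^m + Σ_{k=0}^{m−1} k!/(log x)^k)` with
`m = ⌊κ·log x⌋`. -/
noncomputable def liApprox (κ α x : ℝ) : ℝ :=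
  x / Real.log x *
    (α * (Nat.factorial ⌊κ * Real.log x⌋₊ : ℝ) / Real.log x ^ ⌊κ * Real.log x⌋₊
      + ∑ k ∈ Finset.range ⌊κ * Real.log x⌋₊, (Nat.factorial k : ℝ) / Real.log x ^ k)

open Finset Real in

noncomputable def psi (κ : ℝ) (m : ℕ) (u : ℝ) : ℝ :=
  Real.exp u * ((κ * u - m) * (Nat.factorial m : ℝ) / u ^ (m + 1)
    + ∑ k ∈ Finset.range m, (Nat.factorial k : ℝ) / u ^ (k + 1))

lemma hasDerivAt_psi (κ : ℝ) (m : ℕ) (u : ℝ) (hu : u ≠ 0) :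
    HasDerivAt (psi κ m)
      (Real.exp u * (1 / u - (Nat.factorial m : ℝ) / u ^ (m + 1)
        + (κ * u - m) * (Nat.factorial m : ℝ) / u ^ (m + 1)
        + κ * (Nat.factorial m : ℝ) / u ^ (m + 1)
        - (m + 1) * (κ * u - m) * (Nat.factorial m : ℝ) / u ^ (m + 2))) u := by
  have hpow : ∀ n : ℕ, HasDerivAt (fun u : ℝ => (u ^ (n + 1))⁻¹)
      (-(((n : ℝ) + 1) * u ^ n) / (u ^ (n + 1)) ^ 2) u := by
    intro n
    have := (hasDerivAt_pow (n + 1) u).inv (pow_ne_zero _ hu)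
    simp at this; exact this
  have h1 : HasDerivAt (fun u : ℝ => (κ * u - m) * (Nat.factorial m : ℝ))
      (κ * (Nat.factorial m : ℝ)) u := by
    simpa using ((((hasDerivAt_id u).const_mul κ).sub_const (m : ℝ)).mul_const
      (Nat.factorial m : ℝ))
  have h2 := h1.mul (hpow m)
  have hsum : HasDerivAt
      (fun u : ℝ => ∑ k ∈ Finset.range m, (Nat.factorial k : ℝ) * (u ^ (k + 1))⁻¹)
      (∑ k ∈ Finset.range m,
        (Nat.factorial k : ℝ) * (-(((k : ℝ) + 1) * u ^ k) / (u ^ (k + 1)) ^ 2)) u := by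
    exact HasDerivAt.fun_sum fun k _ => (hpow k).const_mul _
  have hinner := h2.add hsum
  have hpsi := (Real.hasDerivAt_exp u).mul hinner
  have hfun : psi κ m = fun u : ℝ => Real.exp u *
      ((κ * u - m) * (Nat.factorial m : ℝ) * (u ^ (m + 1))⁻¹
        + ∑ k ∈ Finset.range m, (Nat.factorial k : ℝ) * (u ^ (k + 1))⁻¹) := by
    funext v
    simp [psi, div_eq_mul_inv]
  rw [hfun]
  refine hpsi.congr_deriv (Eq.symm ?_)
  have hterm : ∀ k : ℕ, (Nat.factorial k : ℝ) / u ^ (k + 1)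
      + (Nat.factorial k : ℝ) * (-(((k : ℝ) + 1) * u ^ k) / (u ^ (k + 1)) ^ 2)
      = (Nat.factorial k : ℝ) / u ^ (k + 1) - (Nat.factorial (k + 1) : ℝ) / u ^ ((k + 1) + 1) := by
    intro k
    have : (Nat.factorial (k + 1) : ℝ) = ((k : ℝ) + 1) * (Nat.factorial k : ℝ) := by
      push_cast [Nat.factorial_succ]; ring
    rw [this]
    field_simp
    ring
  have htel : (∑ k ∈ Finset.range m, (Nat.factorial k : ℝ) / u ^ (k + 1))
      + (∑ k ∈ Finset.range m,
        (Nat.factorial k : ℝ) * (-(((k : ℝ) + 1) * u ^ k) / (u ^ (k + 1)) ^ 2))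
      = 1 / u - (Nat.factorial m : ℝ) / u ^ (m + 1) := by
    rw [← Finset.sum_add_distrib]
    rw [Finset.sum_congr rfl fun k _ => hterm k]
    rw [Finset.sum_range_sub' (fun k => (Nat.factorial k : ℝ) / u ^ (k + 1)) m]
    norm_num
  set S1 := ∑ k ∈ Finset.range m, (Nat.factorial k : ℝ) / u ^ (k + 1) with hS1
  set S2 := ∑ k ∈ Finset.range m,
    (Nat.factorial k : ℝ) * (-(((k : ℝ) + 1) * u ^ k) / (u ^ (k + 1)) ^ 2) with hS2
  have hS1' : (∑ k ∈ Finset.range m, (Nat.factorial k : ℝ) * (u ^ (k + 1))⁻¹) = S1 := by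
    rw [hS1]; exact Finset.sum_congr rfl fun k _ => (div_eq_mul_inv _ _).symm
  simp only [Pi.mul_apply, Pi.add_apply]
  rw [hS1']
  have expand : Real.exp u * ((κ * u - m) * (Nat.factorial m : ℝ) * (u ^ (m + 1))⁻¹ + S1)
      + Real.exp u * (κ * (Nat.factorial m : ℝ) * (u ^ (m + 1))⁻¹
        + (κ * u - m) * (Nat.factorial m : ℝ) * (-(((m : ℝ) + 1) * u ^ m) / (u ^ (m + 1)) ^ 2)
        + S2)
      = Real.exp u * ((S1 + S2)
        + ((κ * u - m) * (Nat.factorial m : ℝ) * (u ^ (m + 1))⁻¹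
          + κ * (Nat.factorial m : ℝ) * (u ^ (m + 1))⁻¹
          + (κ * u - m) * (Nat.factorial m : ℝ)
            * (-(((m : ℝ) + 1) * u ^ m) / (u ^ (m + 1)) ^ 2))) := by ring
  rw [expand, htel]
  field_simp
  ring

lemma key_ineq (κ : ℝ) (m : ℕ) (u : ℝ) (hu : 1 ≤ u) (h1 : (m : ℝ) ≤ κ * u)
    (h2 : κ * u ≤ m + 1) (hκ0 : 0 < κ) (hκ : κ ≤ 1 / 2) :
    (Nat.factorial m : ℝ) * u + (m + 1) * (κ * u - m) * (Nat.factorial m : ℝ)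
      ≤ u ^ (m + 1) + (κ * u - m) * (Nat.factorial m : ℝ) * u
        + κ * (Nat.factorial m : ℝ) * u := by
  have hu0 : (0 : ℝ) < u := lt_of_lt_of_le one_pos hu
  rcases Nat.eq_zero_or_pos m with hm | hm
  · subst hm
    simp only [Nat.factorial_zero, Nat.cast_zero, Nat.cast_one, pow_one, zero_add]
    nlinarith [mul_pos hκ0 hu0, sq_nonneg u, mul_pos (mul_pos hκ0 hu0) hu0]
  · have hm1 : (1 : ℝ) ≤ (m : ℝ) := by exact_mod_cast hm
    have hfact : (Nat.factorial m : ℝ) ≤ (κ * u) ^ m := by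
      calc (Nat.factorial m : ℝ) ≤ (m : ℝ) ^ m := by exact_mod_cast Nat.factorial_le_pow m
        _ ≤ (κ * u) ^ m := by
            apply pow_le_pow_left₀ (by positivity) h1
    have hκm : κ ^ m ≤ 1 / 2 := by
      calc κ ^ m ≤ κ := pow_le_of_le_one hκ0.le (by linarith) hm.ne'
        _ ≤ 1 / 2 := hκ
    have hum : (m : ℝ) + 1 ≤ u := by nlinarith
    have hP : (0 : ℝ) < u ^ m := by positivity
    have hF0 : (0 : ℝ) ≤ (Nat.factorial m : ℝ) := by positivity
    have hA0 : (0 : ℝ) ≤ κ * u - m := by linarith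
    have hA1 : κ * u - m ≤ 1 := by linarith
    have hF2 : (Nat.factorial m : ℝ) ≤ κ ^ m * u ^ m := by
      rw [← mul_pow]; exact hfact
    have hKP : κ ^ m * u ^ m ≤ u ^ m / 2 := by nlinarith
    have hFP : (Nat.factorial m : ℝ) ≤ u ^ m / 2 := le_trans hF2 hKP
    have hpow : u ^ (m + 1) = u ^ m * u := pow_succ u m
    rw [hpow]
    nlinarith [mul_le_mul_of_nonneg_right hum (mul_nonneg hA0 hF0),
      mul_le_mul_of_nonneg_right hFP hu0.le,
      mul_nonneg (mul_nonneg hκ0.le hF0) hu0.le,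
      mul_nonneg (mul_nonneg hA0 hF0) hu0.le, mul_nonneg hP.le hu0.le]

lemma psi_monoOn (κ : ℝ) (hκ0 : 0 < κ) (hκ : κ ≤ 1 / 2) (m : ℕ) :
    MonotoneOn (psi κ m) (Set.Icc (max 1 ((m : ℝ) / κ)) (((m : ℝ) + 1) / κ)) := by
  set a := max 1 ((m : ℝ) / κ)
  set b := ((m : ℝ) + 1) / κ
  have hmem : ∀ u ∈ Set.Icc a b, (1 : ℝ) ≤ u := fun u hu =>
    le_trans (le_max_left _ _) hu.1
  apply monotoneOn_of_deriv_nonneg (convex_Icc a b)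
  · intro u hu
    have h1 : (1 : ℝ) ≤ u := hmem u hu
    exact (hasDerivAt_psi κ m u (by linarith)).continuousAt.continuousWithinAt
  · intro u hu
    rw [interior_Icc] at hu
    have h1 : (1 : ℝ) ≤ u := le_trans (le_max_left _ _) hu.1.le
    exact (hasDerivAt_psi κ m u (by linarith)).differentiableAt.differentiableWithinAt
  · intro u hu
    rw [interior_Icc] at hu
    have h1 : (1 : ℝ) ≤ u := le_trans (le_max_left _ _) hu.1.le
    have hu0 : (0 : ℝ) < u := by linarith
    rw [(hasDerivAt_psi κ m u hu0.ne').deriv]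
    have hml : (m : ℝ) ≤ κ * u := by
      have : (m : ℝ) / κ ≤ u := le_trans (le_max_right _ _) hu.1.le
      rw [div_le_iff₀ hκ0] at this
      linarith
    have hmr : κ * u ≤ (m : ℝ) + 1 := by
      have : u ≤ ((m : ℝ) + 1) / κ := hu.2.le
      rw [le_div_iff₀ hκ0] at this
      linarith
    apply mul_nonneg (Real.exp_pos u).le
    have hB : 1 / u - (Nat.factorial m : ℝ) / u ^ (m + 1)
        + (κ * u - m) * (Nat.factorial m : ℝ) / u ^ (m + 1)
        + κ * (Nat.factorial m : ℝ) / u ^ (m + 1)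
        - (m + 1) * (κ * u - m) * (Nat.factorial m : ℝ) / u ^ (m + 2)
        = (u ^ (m + 1) + (κ * u - m) * (Nat.factorial m : ℝ) * u
            + κ * (Nat.factorial m : ℝ) * u
            - ((Nat.factorial m : ℝ) * u + (m + 1) * (κ * u - m) * (Nat.factorial m : ℝ)))
          / u ^ (m + 2) := by
      field_simp
      ring
    rw [hB]
    apply div_nonneg _ (by positivity)
    have := key_ineq κ m u h1 hml hmr hκ0 hκ
    linarith

lemma psi_boundary (κ : ℝ) (m : ℕ) (w : ℝ) (hw : κ * w = (m : ℝ) + 1) :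
    psi κ m w = psi κ (m + 1) w := by
  unfold psi
  rw [Finset.sum_range_succ]
  have h1 : κ * w - (m : ℝ) = 1 := by rw [hw]; ring
  have h2 : κ * w - ((m : ℕ) + 1 : ℕ) = 0 := by push_cast; rw [hw]; ring
  rw [h1, h2]
  push_cast
  ring

lemma psi_glue (κ : ℝ) (hκ0 : 0 < κ) (hκ : κ ≤ 1 / 2) :
    ∀ d : ℕ, ∀ u v : ℝ, 1 ≤ u → u ≤ v → ⌊κ * v⌋₊ - ⌊κ * u⌋₊ = d →
      psi κ ⌊κ * u⌋₊ u ≤ psi κ ⌊κ * v⌋₊ v := by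
  intro d
  induction d with
  | zero =>
    intro u v hu huv hd
    have hmn : ⌊κ * u⌋₊ ≤ ⌊κ * v⌋₊ :=
      Nat.floor_le_floor (by nlinarith)
    have heq : ⌊κ * u⌋₊ = ⌊κ * v⌋₊ := le_antisymm hmn (by omega)
    set m := ⌊κ * u⌋₊ with hm
    rw [← heq]
    have hu0 : (0 : ℝ) < u := lt_of_lt_of_le one_pos hu
    have hv1 : (1 : ℝ) ≤ v := le_trans hu huv
    have hκu : (m : ℝ) ≤ κ * u := Nat.floor_le (by positivity)
    have hκv : κ * v < (m : ℝ) + 1 := by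
      rw [heq]; push_cast; exact Nat.lt_floor_add_one (κ * v)
    have hul : max 1 ((m : ℝ) / κ) ≤ u := by
      apply max_le hu
      rw [div_le_iff₀ hκ0]; linarith
    have hvr : v ≤ ((m : ℝ) + 1) / κ := by
      rw [le_div_iff₀ hκ0]; linarith
    exact psi_monoOn κ hκ0 hκ m ⟨hul, le_trans huv hvr⟩
      ⟨le_trans hul huv, hvr⟩ huv
  | succ d ih =>
    intro u v hu huv hd
    set m := ⌊κ * u⌋₊ with hm
    set n := ⌊κ * v⌋₊ with hn
    have hu0 : (0 : ℝ) < u := lt_of_lt_of_le one_pos hu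
    set w := ((m : ℝ) + 1) / κ with hwdef
    have hκw : κ * w = (m : ℝ) + 1 := by
      rw [hwdef]; field_simp
    have hκu : (m : ℝ) ≤ κ * u := Nat.floor_le (by positivity)
    have hκu' : κ * u < (m : ℝ) + 1 := by
      push_cast [hm]; exact Nat.lt_floor_add_one (κ * u)
    have huw : u ≤ w := by
      rw [hwdef, le_div_iff₀ hκ0]; linarith
    have hfloorw : ⌊κ * w⌋₊ = m + 1 := by
      rw [hκw]
      rw [show ((m : ℝ) + 1) = ((m + 1 : ℕ) : ℝ) by push_cast; ring]
      exact Nat.floor_natCast _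
    have hmn : m + 1 ≤ n := by omega
    have hwv : w ≤ v := by
      have hκv : (n : ℝ) ≤ κ * v := Nat.floor_le (by nlinarith)
      have : ((m : ℝ) + 1) ≤ κ * v := by
        calc ((m : ℝ) + 1) ≤ (n : ℝ) := by exact_mod_cast hmn
          _ ≤ κ * v := hκv
      rw [hwdef, div_le_iff₀ hκ0]; linarith
    have step1 : psi κ m u ≤ psi κ m w := by
      have hul : max 1 ((m : ℝ) / κ) ≤ u := by
        apply max_le hu
        rw [div_le_iff₀ hκ0]; linarith
      have hwr : w ≤ ((m : ℝ) + 1) / κ := le_refl _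
      exact psi_monoOn κ hκ0 hκ m ⟨hul, le_trans huw hwr⟩
        ⟨le_trans hul huw, hwr⟩ huw
    have step2 : psi κ m w = psi κ ⌊κ * w⌋₊ w := by
      rw [hfloorw]; exact psi_boundary κ m w hκw
    have step3 : psi κ ⌊κ * w⌋₊ w ≤ psi κ n v := by
      have := ih w v (le_trans hu huw) hwv (by rw [hfloorw]; omega)
      rw [← hn] at this
      exact this
    calc psi κ m u ≤ psi κ m w := step1
      _ = psi κ ⌊κ * w⌋₊ w := step2
      _ ≤ psi κ n v := step3

lemma liApprox_eq_psi (κ x : ℝ) (hx : 0 < x) (hL : Real.log x ≠ 0) :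
    liApprox κ (κ * Real.log x - ⌊κ * Real.log x⌋₊) x
      = psi κ ⌊κ * Real.log x⌋₊ (Real.log x) := by
  unfold liApprox psi
  rw [Real.exp_log hx]
  set L := Real.log x with hLdef
  set m := ⌊κ * L⌋₊ with hm
  rw [mul_add, mul_add, Finset.mul_sum, Finset.mul_sum]
  congr 1
  · rw [pow_succ]
    field_simp
  · apply Finset.sum_congr rfl
    intro k _
    rw [pow_succ]
    field_simp


/-- Let `X ≥ e`. Suppose there are `I : ℕ` and naturals
`x₀, …, x_{I+1}` with `x₀ = 2` such that for each `i ≤ I`, `x_{i+1}` is the largest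
natural `n > x_i` with `li̲(n) ≤ π(x_i)`, and `X ≤ x_{I+1}`. Then `li̲(x) ≤ π(x)` for
all real `x` with `e ≤ x ≤ X`. Here `κ̲ ∈ (0,1)` solves `κ(1−log κ) = 1/2` and
`li̲(x) = li_{κ̲,α̲}(x)` with `α̲ = κ̲·log x − ⌊κ̲·log x⌋`. -/
theorem liUnder_le_primeCounting_of_seq (κ : ℝ) (hκ0 : 0 < κ) (hκ1 : κ < 1)
    (hsol : κ * (1 - Real.log κ) = 1 / 2)
    (X : ℝ) (hX : Real.exp 1 ≤ X) (I : ℕ) (seq : ℕ → ℕ) (hseq0 : seq 0 = 2)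
    (hstep : ∀ i ≤ I,
      IsGreatest {n : ℕ | seq i < n ∧
          liApprox κ (κ * Real.log n - ⌊κ * Real.log n⌋₊) n ≤
            (Nat.primeCounting (seq i) : ℝ)}
        (seq (i + 1)))
    (hXle : X ≤ (seq (I + 1) : ℝ)) :
    ∀ x : ℝ, Real.exp 1 ≤ x → x ≤ X →
      liApprox κ (κ * Real.log x - ⌊κ * Real.log x⌋₊) x ≤ (Nat.primeCounting ⌊x⌋₊ : ℝ) := by
  classical
  intro x hex hxX
  have hκh : κ ≤ 1 / 2 := by
    have hlogκ : Real.log κ < 0 := Real.log_neg hκ0 hκ1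
    nlinarith
  have hx0 : (0 : ℝ) < x := lt_of_lt_of_le (Real.exp_pos 1) hex
  have hLx : (1 : ℝ) ≤ Real.log x := (Real.le_log_iff_exp_le hx0).mpr hex
  have hex2 : (2 : ℝ) ≤ Real.exp 1 := by
    nlinarith [Real.exp_one_gt_d9]
  have hPI : x ≤ (seq (I + 1) : ℝ) := le_trans hxX hXle
  set P : ℕ → Prop := fun i => x ≤ (seq (i + 1) : ℝ) with hP
  have hex' : ∃ i, P i := ⟨I, hPI⟩
  set i := Nat.find hex' with hi
  have hiI : i ≤ I := Nat.find_min' hex' hPI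
  have hspec : x ≤ (seq (i + 1) : ℝ) := Nat.find_spec hex'
  have hlow : (seq i : ℝ) ≤ x := by
    rcases Nat.eq_zero_or_pos i with h0 | hpos
    · rw [h0, hseq0]
      norm_num
      linarith
    · obtain ⟨j, hj⟩ := Nat.exists_eq_succ_of_ne_zero hpos.ne'
      have := Nat.find_min hex' (by omega : j < i)
      rw [hP] at this
      simp only [not_le] at this
      rw [hj]
      exact le_of_lt this
  have hfloor : seq i ≤ ⌊x⌋₊ := Nat.le_floor hlow
  have hπ : (Nat.primeCounting (seq i) : ℝ) ≤ (Nat.primeCounting ⌊x⌋₊ : ℝ) := by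
    exact_mod_cast Nat.monotone_primeCounting hfloor
  set N := seq (i + 1) with hN
  have hmem := (hstep i hiI).1
  have hliN : liApprox κ (κ * Real.log N - ⌊κ * Real.log N⌋₊) N
      ≤ (Nat.primeCounting (seq i) : ℝ) := hmem.2
  have hNx : x ≤ (N : ℝ) := hspec
  have hN0 : (0 : ℝ) < (N : ℝ) := lt_of_lt_of_le hx0 hNx
  have hLN : (1 : ℝ) ≤ Real.log N := (Real.le_log_iff_exp_le hN0).mpr (le_trans hex hNx)
  have hlog : Real.log x ≤ Real.log N := Real.log_le_log hx0 hNx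
  calc liApprox κ (κ * Real.log x - ⌊κ * Real.log x⌋₊) x
      = psi κ ⌊κ * Real.log x⌋₊ (Real.log x) :=
        liApprox_eq_psi κ x hx0 (by linarith)
    _ ≤ psi κ ⌊κ * Real.log (N : ℝ)⌋₊ (Real.log (N : ℝ)) :=
        psi_glue κ hκ0 hκh _ _ _ hLx hlog rfl
    _ = liApprox κ (κ * Real.log N - ⌊κ * Real.log N⌋₊) N :=
        (liApprox_eq_psi κ N hN0 (by linarith)).symm
    _ ≤ (Nat.primeCounting (seq i) : ℝ) := hliN
    _ ≤ (Nat.primeCounting ⌊x⌋₊ : ℝ) := hπ
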